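/- arXiv:1701.08788 — 8 statements merged into one kernel-verified Lean document; each statement's English description precedes it below -/
import Mathlib

section
/- If S is a sequence of length n−1 in the cyclic group C_n (n ≥ 2) that is free of product-1 subsequences, then S consists of n−1 copies of a single generator g of C_n. -/
/-- A sequence (multiset) in a group is *free of product-1 subsequences* if no
nonempty subfamily can be multiplied in some order to give the identity. -/
def IsProdOneFree {G : Type*} [Group G] (S : Multiset G) : Prop :=
  ¬ ∃ T : Multiset G, T ≤ S ∧ T ≠ 0 ∧ ∃ l : List G, (l : Multiset G) = T ∧ l.prod = 1

lemma free_forall {G : Type*} [CommGroup G] {S : Multiset G} (h : IsProdOneFree S) :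
    ∀ T : Multiset G, T ≤ S → T ≠ 0 → T.prod ≠ 1 := by
  intro T hT hT0 hprod
  exact h ⟨T, hT, hT0, T.toList, Multiset.coe_toList T,
    by rw [← Multiset.prod_toList] at hprod; exact hprod⟩

lemma take_prod_ne {G : Type*} [CommGroup G] {S : Multiset G} (h : IsProdOneFree S)
    {l : List G} (hl : (l : Multiset G) ≤ S) {i j : ℕ} (hij : i < j) (hj : j ≤ l.length) :
    (l.take i).prod ≠ (l.take j).prod := by
  have hslice : l.take j = l.take i ++ (l.drop i).take (j - i) := by
    rw [← List.take_add]; congr 1; omega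
  intro he
  have hone : ((l.drop i).take (j - i)).prod = 1 := by
    rw [hslice, List.prod_append] at he
    exact (left_eq_mul.mp he)
  have hsub : ((l.drop i).take (j - i)).Sublist l :=
    (List.take_sublist _ _).trans (List.drop_sublist _ _)
  have hle : ((((l.drop i).take (j - i)) : List G) : Multiset G) ≤ S :=
    le_trans (Multiset.coe_le.mpr hsub.subperm) hl
  have hne : ((((l.drop i).take (j - i)) : List G) : Multiset G) ≠ 0 := by
    rw [Ne, Multiset.coe_eq_zero, ← List.length_eq_zero_iff]
    rw [List.length_take, List.length_drop]
    omega
  exact free_forall h _ hle hne (by simpa using hone)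

theorem inverse_cyclic (n : ℕ) (hn : 2 ≤ n)
    (S : Multiset (Multiplicative (ZMod n))) (hS : Multiset.card S = n - 1)
    (hfree : IsProdOneFree S) :
    ∃ g : Multiplicative (ZMod n),
      Subgroup.zpowers g = ⊤ ∧ S = Multiset.replicate (n - 1) g := by
  haveI : NeZero n := ⟨by omega⟩
  have hcard : Fintype.card (Multiplicative (ZMod n)) = n := by
    simp [ZMod.card]
  -- prefix products of any ordering of S form a bijection Fin n → G
  have key : ∀ l : List (Multiplicative (ZMod n)), (l : Multiset (Multiplicative (ZMod n))) = S →
      Function.Bijective (fun k : Fin n => (l.take k).prod) := by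
    intro l hl
    have hlen : l.length = n - 1 := by
      have := congrArg Multiset.card hl
      simpa [hS] using this
    rw [Fintype.bijective_iff_injective_and_card]
    refine ⟨?_, by simp [hcard]⟩
    intro i j hij
    by_contra hne
    rcases lt_trichotomy i.val j.val with h | h | h
    · exact take_prod_ne hfree hl.le h (by omega) hij
    · exact hne (Fin.ext h)
    · exact take_prod_ne hfree hl.le h (by omega) hij.symm
  -- all elements of S are equal
  have hall : ∀ a ∈ S, ∀ b ∈ S, a = b := by
    intro a ha b hb
    by_contra hab
    obtain ⟨S', rfl⟩ := Multiset.exists_cons_of_mem ha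
    have hb' : b ∈ S' := by
      rcases Multiset.mem_cons.mp hb with h | h
      · exact absurd h.symm hab
      · exact h
    obtain ⟨T, rfl⟩ := Multiset.exists_cons_of_mem hb'
    set rest := T.toList with hrest
    have hT : (rest : Multiset (Multiplicative (ZMod n))) = T := Multiset.coe_toList T
    have hl1 : ((a :: b :: rest : List (Multiplicative (ZMod n))) : Multiset _) = a ::ₘ b ::ₘ T := by
      rw [← hT, Multiset.cons_coe, Multiset.cons_coe]
    have hl2 : ((b :: a :: rest : List (Multiplicative (ZMod n))) : Multiset _) = a ::ₘ b ::ₘ T := by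
      rw [← hl1]
      exact Multiset.coe_eq_coe.mpr (List.Perm.swap a b rest)
    have hb1 := key _ hl1
    have hb2 := key _ hl2
    have h1n : (1 : ℕ) < n := by omega
    obtain ⟨k, hk⟩ := hb2.2 a
    simp only at hk
    rcases Nat.lt_or_ge k.val 2 with hk2 | hk2
    · have hv : k.val = 0 ∨ k.val = 1 := by omega
      rcases hv with hv | hv
      · -- a = 1, contradiction with injectivity of f1
        have ha1 : a = 1 := by
          rw [hv] at hk; simpa using hk.symm
        have h01 : (⟨1, h1n⟩ : Fin n) = ⟨0, by omega⟩ := by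
          apply hb1.1
          show ((a :: b :: rest).take 1).prod = ((a :: b :: rest).take 0).prod
          simp [ha1]
        simp [Fin.ext_iff] at h01
      · rw [hv] at hk
        simp at hk
        exact hab hk.symm
    · -- k ≥ 2 : f2 k = f1 k
      have hfeq : ((b :: a :: rest).take k).prod = ((a :: b :: rest).take k).prod := by
        obtain ⟨m, hm⟩ : ∃ m, k.val = m + 2 := ⟨k.val - 2, by omega⟩
        rw [hm]
        simp [List.take_succ_cons, mul_left_comm, mul_comm]
      have hke : k = (⟨1, h1n⟩ : Fin n) := by
        apply hb1.1
        show ((a :: b :: rest).take k).prod = ((a :: b :: rest).take 1).prod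
        rw [← hfeq, hk]
        simp
      rw [Fin.ext_iff] at hke
      simp at hke
      omega
  -- S is a replicate
  have hS0 : S ≠ 0 := by
    intro h0
    rw [h0] at hS
    simp at hS
    omega
  obtain ⟨g, hg⟩ := Multiset.exists_mem_of_ne_zero hS0
  have hrep : S = Multiset.replicate (n - 1) g :=
    Multiset.eq_replicate.mpr ⟨hS, fun b hb => hall b hb g hg⟩
  refine ⟨g, ?_, hrep⟩
  -- g generates
  have hlrep : ((List.replicate (n - 1) g : List (Multiplicative (ZMod n))) : Multiset _) = S := by
    rw [hrep]; simp [Multiset.coe_replicate]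
  have hbij := key _ hlrep
  have hdvd : orderOf g ∣ n := by
    apply orderOf_dvd_of_pow_eq_one
    have hp := pow_card_eq_one (x := g)
    rwa [hcard] at hp
  have hpos : 0 < orderOf g := orderOf_pos g
  have hord : orderOf g = n := by
    by_contra hne
    have hlt : orderOf g < n := lt_of_le_of_ne (Nat.le_of_dvd (by omega) hdvd) hne
    have h1 : ((List.replicate (n - 1) g).take ((⟨orderOf g, hlt⟩ : Fin n))).prod
        = ((List.replicate (n - 1) g).take ((⟨0, by omega⟩ : Fin n))).prod := by
      simp only [List.take_replicate, List.prod_replicate]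
      have : min (orderOf g) (n - 1) = orderOf g := by omega
      rw [this]
      simp [pow_orderOf_eq_one]
    have := hbij.1 h1
    simp [Fin.ext_iff, -orderOf_eq_zero_iff] at this
    omega
  have : Nat.card (Subgroup.zpowers g) = Nat.card (Multiplicative (ZMod n)) := by
    rw [Nat.card_zpowers, hord, Nat.card_eq_fintype_card, hcard]
  exact Subgroup.eq_top_of_card_eq _ this
end

section
/- If S is a zero-sum free sequence of length n−2 in the cyclic group C_n (n ≥ 3), then either S = (g)^{n−2} for some g, or S = (g)^{n−3}(g^2) for some g. -/
section Aux

variable {G : Type*} [CommGroup G] {S : Multiset G}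

lemma free_sub (hfree : IsProdOneFree S) {l : List G} (hl : (l : Multiset G) ≤ S)
    (hne : l ≠ []) : l.prod ≠ 1 := fun h =>
  hfree ⟨(l : Multiset G), hl, by simpa using hne, l, rfl, h⟩

lemma free_block (hfree : IsProdOneFree S) {l : List G} (hl : (l : Multiset G) ≤ S)
    {i j : ℕ} (hij : i < j) (hj : j ≤ l.length) :
    (l.take i).prod ≠ (l.take j).prod := by
  intro h
  set b := (l.drop i).take (j - i) with hb
  have hdecomp : l.take j = l.take i ++ b := by
    rw [hb, ← List.take_add, Nat.add_sub_cancel' (le_of_lt hij)]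
  have hprod : b.prod = 1 := by
    rw [hdecomp, List.prod_append] at h
    exact (mul_eq_left.mp h.symm)
  have hlen : b.length = min (j - i) (l.length - i) := by simp [hb]
  have hbne : b ≠ [] := by
    intro hnil
    rw [hnil] at hlen
    simp only [List.length_nil] at hlen
    omega
  have hbS : (b : Multiset G) ≤ S :=
    le_trans (Multiset.coe_le.mpr
      ((List.take_sublist _ _).trans (List.drop_sublist _ _)).subperm) hl
  exact free_sub hfree hbS hbne hprod

lemma swap_lemma [Fintype G] [DecidableEq G] {n : ℕ} (hn : 3 ≤ n)
    (hG : Fintype.card G = n)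
    (hS : Multiset.card S = n - 2) (hfree : IsProdOneFree S)
    {x y : G} {t : List G}
    (hxy : x ≠ y) (hst : ((x :: y :: t : List G) : Multiset G) = S)
    {z : G} (hz1 : z ≠ 1) (hzx : z ≠ x) (hzy : z ≠ y) :
    ∃ j ≤ t.length, z = x * y * (t.take j).prod := by
  have htlen : t.length + 4 = n := by
    have := congrArg Multiset.card hst
    simp [hS] at this
    omega
  set l : List G := x :: y :: t with hl
  set l' : List G := y :: x :: t with hl'
  have hls : ((l' : List G) : Multiset G) = S := by
    rw [← hst]
    exact Multiset.coe_eq_coe.mpr (List.Perm.swap x y t)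
  have hlS : ((l : List G) : Multiset G) ≤ S := le_of_eq hst
  have hlS' : ((l' : List G) : Multiset G) ≤ S := le_of_eq hls
  have hll : l.length = n - 2 := by simp [hl]; omega
  have hll' : l'.length = n - 2 := by simp [hl']; omega
  have key : ∀ (L : List G), (L : Multiset G) ≤ S → L.length = n - 2 →
      ∀ i, i < n - 1 → ∀ j, j < n - 1 →
        (L.take i).prod = (L.take j).prod → i = j := by
    intro L hLS hLl i hi j hj h
    rcases lt_trichotomy i j with h1 | h1 | h1
    · exact absurd h (free_block hfree hLS h1 (by omega))
    · exact h1
    · exact absurd h.symm (free_block hfree hLS h1 (by omega))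
  have hC : ∀ j, x * y * (t.take j).prod = (l.take (j + 2)).prod := by
    intro j
    simp [hl, List.take_succ_cons, mul_assoc]
  have hC' : ∀ j, x * y * (t.take j).prod = (l'.take (j + 2)).prod := by
    intro j
    simp [hl', List.take_succ_cons, mul_assoc, mul_left_comm, mul_comm]
  set C : Finset G := (Finset.range (n - 3)).image (fun j => x * y * (t.take j).prod) with hCdef
  have hmemC : ∀ w ∈ C, ∃ j ≤ t.length, w = x * y * (t.take j).prod := by
    intro w hw
    obtain ⟨j, hj, hjw⟩ := Finset.mem_image.mp hw
    exact ⟨j, by have := Finset.mem_range.mp hj; omega, hjw.symm⟩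
  have hcardC : C.card = n - 3 := by
    rw [hCdef, Finset.card_image_of_injOn, Finset.card_range]
    intro i hi j hj h
    have hi' := Finset.mem_range.mp hi
    have hj' := Finset.mem_range.mp hj
    have := key l hlS hll (i + 2) (by omega) (j + 2) (by omega)
      (by rw [← hC i, ← hC j]; exact h)
    omega
  have h1C : (1 : G) ∉ C := by
    intro h1
    obtain ⟨j, hj, hjw⟩ := Finset.mem_image.mp h1
    have hj' := Finset.mem_range.mp hj
    have h0 : (l.take 0).prod = (l.take (j + 2)).prod := by
      rw [← hC j, hjw]; simp
    have := key l hlS hll 0 (by omega) (j + 2) (by omega) h0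
    omega
  have hxC : x ∉ C := by
    intro hx
    obtain ⟨j, hj, hjw⟩ := Finset.mem_image.mp hx
    have hj' := Finset.mem_range.mp hj
    have h0 : (l.take 1).prod = (l.take (j + 2)).prod := by
      rw [← hC j, hjw]; simp [hl]
    have := key l hlS hll 1 (by omega) (j + 2) (by omega) h0
    omega
  have hyC : y ∉ C := by
    intro hy
    obtain ⟨j, hj, hjw⟩ := Finset.mem_image.mp hy
    have hj' := Finset.mem_range.mp hj
    have h0 : (l'.take 1).prod = (l'.take (j + 2)).prod := by
      rw [← hC' j, hjw]; simp [hl']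
    have := key l' hlS' hll' 1 (by omega) (j + 2) (by omega) h0
    omega
  have hx1 : x ≠ 1 := by
    have hxS : (([x] : List G) : Multiset G) ≤ S := by
      have : ({x} : Multiset G) ≤ S := Multiset.singleton_le.mpr (by rw [← hst]; simp [hl])
      simpa using this
    have := free_sub hfree hxS (by simp)
    simpa using this
  have hy1 : y ≠ 1 := by
    have hyS : (([y] : List G) : Multiset G) ≤ S := by
      have : ({y} : Multiset G) ≤ S := Multiset.singleton_le.mpr (by rw [← hst]; simp [hl])
      simpa using this
    have := free_sub hfree hyS (by simp)
    simpa using this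
  set V : Finset G := insert 1 C with hV
  have hcardV : V.card = n - 2 := by
    rw [hV, Finset.card_insert_of_notMem h1C, hcardC]
    omega
  have hxV : x ∉ V := by
    simp only [hV, Finset.mem_insert]
    push_neg
    exact ⟨hx1, hxC⟩
  have hyV : y ∉ V := by
    simp only [hV, Finset.mem_insert]
    push_neg
    exact ⟨hy1, hyC⟩
  have hsub : ({x, y} : Finset G) ⊆ Finset.univ \ V := by
    intro w hw
    rcases Finset.mem_insert.mp hw with h | h
    · subst h; exact Finset.mem_sdiff.mpr ⟨Finset.mem_univ _, hxV⟩
    · rw [Finset.mem_singleton.mp h]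
      exact Finset.mem_sdiff.mpr ⟨Finset.mem_univ _, hyV⟩
  have hcardsd : (Finset.univ \ V).card = 2 := by
    rw [Finset.card_sdiff_of_subset (Finset.subset_univ _), Finset.card_univ, hG, hcardV]
    omega
  have hxy2 : ({x, y} : Finset G).card = 2 := by
    rw [Finset.card_insert_of_notMem (by simpa using hxy), Finset.card_singleton]
  have heq : ({x, y} : Finset G) = Finset.univ \ V :=
    Finset.eq_of_subset_of_card_le hsub (by omega)
  have hzV : z ∈ V := by
    by_contra hzV
    have : z ∈ Finset.univ \ V := Finset.mem_sdiff.mpr ⟨Finset.mem_univ _, hzV⟩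
    rw [← heq] at this
    rcases Finset.mem_insert.mp this with h | h
    · exact hzx h
    · exact hzy (Finset.mem_singleton.mp h)
  rcases Finset.mem_insert.mp hzV with h | h
  · exact absurd h hz1
  · exact hmemC z h

lemma pair_eq [Fintype G] [DecidableEq G] {n : ℕ} (hn : 3 ≤ n)
    (hG : Fintype.card G = n)
    (hS : Multiset.card S = n - 2) (hfree : IsProdOneFree S)
    {x y c d : G} {u : List G} (hxy : x ≠ y)
    (hst : ((x :: y :: c :: d :: u : List G) : Multiset G) = S) : c = d := by
  have hst2 : ((x :: y :: d :: c :: u : List G) : Multiset G) = S := by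
    rw [← hst]
    exact Multiset.coe_eq_coe.mpr (((List.Perm.swap c d u).cons y).cons x)
  have hlS : ((x :: y :: c :: d :: u : List G) : Multiset G) ≤ S := le_of_eq hst
  have hsubl : ∀ (L : List G), L.Sublist (x :: y :: c :: d :: u : List G) →
      (L : Multiset G) ≤ S := fun L h => le_trans (Multiset.coe_le.mpr h.subperm) hlS
  have hz1 : x * y * c ≠ 1 := by
    have := free_sub hfree (hsubl [x, y, c] (by simp)) (by simp)
    simpa [mul_assoc] using this
  have hzx : x * y * c ≠ x := by
    intro h
    have hyc : y * c = 1 := by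
      have : x * (y * c) = x * 1 := by rw [mul_one, ← mul_assoc]; exact h
      exact mul_left_cancel this
    have := free_sub hfree (hsubl [y, c] (by simp)) (by simp)
    simp [hyc] at this
  have hzy : x * y * c ≠ y := by
    intro h
    have hxc : x * c = 1 := by
      have h' : y * (x * c) = y * 1 := by
        rw [mul_one, mul_left_comm, ← mul_assoc]
        exact h
      exact mul_left_cancel h'
    have := free_sub hfree (hsubl [x, c] (by simp)) (by simp)
    simp [hxc] at this
  obtain ⟨j, hj, hz⟩ := swap_lemma hn hG hS hfree hxy hst2 hz1 hzx hzy
  have hc : c = ((d :: c :: u).take j).prod := mul_left_cancel hz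
  match j, hj with
  | 0, _ =>
    rw [List.take_zero, List.prod_nil] at hc
    have := free_sub hfree (hsubl [c] (by simp)) (by simp)
    exact absurd (by simp [hc] : ([c] : List G).prod = 1) this
  | 1, _ =>
    simpa using hc
  | (k + 2), hj =>
    exfalso
    simp only [List.take_succ_cons] at hc
    rw [List.prod_cons, List.prod_cons] at hc
    have hdp : d * (u.take k).prod = 1 := by
      have hc' : (d * (u.take k).prod) * c = c := by
        conv_rhs => rw [hc]
        rw [mul_assoc, mul_comm ((u.take k).prod) c]
      exact mul_eq_right.mp hc'
    have hsl : (d :: u.take k : List G).Sublist (x :: y :: c :: d :: u : List G) := by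
      have h1 : (d :: u.take k : List G).Sublist (d :: u : List G) :=
        (List.take_sublist k u).cons₂ d
      have h2 : (d :: u : List G).Sublist (x :: y :: c :: d :: u : List G) :=
        ((List.sublist_cons_self c _).trans (List.sublist_cons_self y _)).trans
          (List.sublist_cons_self x _)
      exact h1.trans h2
    have := free_sub hfree (hsubl _ hsl) (by simp)
    simp only [List.prod_cons] at this
    exact this hdp

lemma endgame [Fintype G] [DecidableEq G] {n : ℕ} (hn : 6 ≤ n)
    (hG : Fintype.card G = n)
    (hS : Multiset.card S = n - 2) (hfree : IsProdOneFree S)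
    {g h : G} (hgh : h ≠ g) (hst : S = h ::ₘ Multiset.replicate (n - 3) g) :
    h = g ^ 2 := by
  by_contra hne
  have h43 : n - 4 + 1 = n - 3 := by omega
  have hst' : ((h :: g :: List.replicate (n - 4) g : List G) : Multiset G) = S := by
    rw [hst, ← Multiset.cons_coe, ← Multiset.cons_coe, Multiset.coe_replicate, ← h43,
      Multiset.replicate_succ]
  have hgg : ((g :: List.replicate 1 g : List G) : Multiset G) ≤ S := by
    rw [hst]
    refine le_trans ?_ (Multiset.le_cons_self _ _)
    have : ((g :: List.replicate 1 g : List G) : Multiset G) = Multiset.replicate 2 g := by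
      rw [show (g :: List.replicate 1 g : List G) = List.replicate 2 g from rfl,
        Multiset.coe_replicate]
    rw [this]
    exact (Multiset.replicate_le_replicate g).mpr (by omega)
  have hz1 : g ^ 2 ≠ 1 := by
    have := free_sub hfree hgg (by simp)
    simpa [pow_two] using this
  have hg1 : g ≠ 1 := by
    have hgle : (([g] : List G) : Multiset G) ≤ S := by
      rw [hst]
      refine le_trans ?_ (Multiset.le_cons_self _ _)
      have : (([g] : List G) : Multiset G) = Multiset.replicate 1 g := by simp
      rw [this]
      exact (Multiset.replicate_le_replicate g).mpr (by omega)
    have := free_sub hfree hgle (by simp)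
    simpa using this
  have hh1 : h ≠ 1 := by
    have hhle : (([h] : List G) : Multiset G) ≤ S := by
      rw [hst]
      have : (([h] : List G) : Multiset G) = {h} := by simp
      rw [this]
      exact Multiset.cons_le_cons h (Multiset.zero_le _)
    have := free_sub hfree hhle (by simp)
    simpa using this
  have hzx : g ^ 2 ≠ h := fun hh => hne hh.symm
  have hzy : g ^ 2 ≠ g := by
    intro hh
    have : g = 1 := by
      have : g * g = g * 1 := by rw [mul_one, ← pow_two]; exact hh
      exact mul_left_cancel this
    exact hg1 this
  obtain ⟨j, hj, hz⟩ := swap_lemma (by omega) hG hS hfree hgh hst' hz1 hzx hzy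
  simp only [List.length_replicate] at hj
  have htake : ((List.replicate (n - 4) g).take j) = List.replicate j g := by
    rw [List.take_replicate, Nat.min_eq_left hj]
  rw [htake, List.prod_replicate] at hz
  -- hz : g ^ 2 = h * g * g ^ j
  match j, hj with
  | 0, _ =>
    rw [pow_zero, mul_one, pow_two] at hz
    exact hgh (mul_right_cancel hz).symm
  | 1, _ =>
    rw [pow_one, pow_two] at hz
    have hz' : h * g * g = g * g := hz.symm
    exact hh1 (mul_eq_right.mp (mul_right_cancel hz'))
  | (k + 2), hj =>
    have hkey : h * g ^ (k + 1) = 1 := by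
      have hexp : h * g * g ^ (k + 2) = (h * g ^ (k + 1)) * g ^ 2 := by group
      rw [hexp] at hz
      exact (mul_eq_right.mp hz.symm)
    have hle : ((h :: List.replicate (k + 1) g : List G) : Multiset G) ≤ S := by
      rw [hst, ← Multiset.cons_coe, Multiset.coe_replicate]
      exact Multiset.cons_le_cons h ((Multiset.replicate_le_replicate g).mpr (by omega))
    have := free_sub hfree hle (by simp)
    simp only [List.prod_cons, List.prod_replicate] at this
    exact this hkey

end Aux

theorem add4 : ∀ a b : ZMod 4, a ≠ 0 → b ≠ 0 → a + b ≠ 0 →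
    (a = b ∨ b = a + a ∨ a = b + b) := by decide

theorem mul4 : ∀ a b : Multiplicative (ZMod 4), a ≠ 1 → b ≠ 1 → a * b ≠ 1 →
    (a = b ∨ b = a * a ∨ a = b * b) := add4

theorem add5 : ∀ a b c : ZMod 5, a ≠ 0 → b ≠ 0 → c ≠ 0 → a + b ≠ 0 → a + c ≠ 0 →
    b + c ≠ 0 → a + b + c ≠ 0 →
    ((a = b ∧ b = c) ∨ (a = b ∧ c = a + a) ∨ (a = c ∧ b = a + a) ∨ (b = c ∧ a = b + b)) := by
  decide

theorem mul5 : ∀ a b c : Multiplicative (ZMod 5), a ≠ 1 → b ≠ 1 → c ≠ 1 → a * b ≠ 1 →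
    a * c ≠ 1 → b * c ≠ 1 → a * b * c ≠ 1 →
    ((a = b ∧ b = c) ∨ (a = b ∧ c = a * a) ∨ (a = c ∧ b = a * a) ∨ (b = c ∧ a = b * b)) := add5

theorem inverse_cyclic_nsub2 (n : ℕ) (hn : 3 ≤ n)
    (S : Multiset (Multiplicative (ZMod n))) (hS : Multiset.card S = n - 2)
    (hfree : IsProdOneFree S) :
    (∃ g : Multiplicative (ZMod n), S = Multiset.replicate (n - 2) g) ∨
    (∃ g : Multiplicative (ZMod n), S = Multiset.replicate (n - 3) g + {g ^ 2}) := by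
  haveI : NeZero n := ⟨by omega⟩
  have hG : Fintype.card (Multiplicative (ZMod n)) = n := by simp [ZMod.card]
  rcases Nat.lt_or_ge n 6 with h6 | h6
  · interval_cases n
    · -- n = 3
      left
      obtain ⟨a, ha⟩ := Multiset.card_eq_one.mp (show Multiset.card S = 1 by omega)
      exact ⟨a, by simpa using ha⟩
    · -- n = 4
      obtain ⟨a, b, hab⟩ := Multiset.card_eq_two.mp (show Multiset.card S = 2 by omega)
      have hab' : (([a, b] : List (Multiplicative (ZMod 4))) : Multiset _) = S := by
        rw [hab]; rfl
      have hsubl : ∀ (L : List (Multiplicative (ZMod 4))), L.Sublist [a, b] →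
          (L : Multiset _) ≤ S := fun L h =>
        le_trans (Multiset.coe_le.mpr h.subperm) (le_of_eq hab')
      have ha1 : a ≠ 1 := by
        simpa using free_sub hfree (hsubl [a] ((List.nil_sublist [b]).cons₂ a)) (by simp)
      have hb1 : b ≠ 1 := by
        simpa using free_sub hfree (hsubl [b] (List.sublist_cons_self a [b])) (by simp)
      have hab1 : a * b ≠ 1 := by
        simpa [mul_assoc] using free_sub hfree (hsubl [a, b] (List.Sublist.refl _)) (by simp)
      rcases mul4 a b ha1 hb1 hab1 with h | h | h
      · left
        exact ⟨a, by rw [hab, ← h]; rfl⟩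
      · right
        refine ⟨a, ?_⟩
        rw [hab, h, pow_two]
        rfl
      · right
        refine ⟨b, ?_⟩
        rw [hab, h, pow_two, Multiset.pair_comm]
        rfl
    · -- n = 5
      obtain ⟨a, b, c, habc⟩ := Multiset.card_eq_three.mp (show Multiset.card S = 3 by omega)
      have habc' : (([a, b, c] : List (Multiplicative (ZMod 5))) : Multiset _) = S := by
        rw [habc]; rfl
      have hsubl : ∀ (L : List (Multiplicative (ZMod 5))), L.Sublist [a, b, c] →
          (L : Multiset _) ≤ S := fun L h =>
        le_trans (Multiset.coe_le.mpr h.subperm) (le_of_eq habc')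
      have ha1 : a ≠ 1 := by
        simpa using free_sub hfree
          (hsubl [a] ((List.nil_sublist [b, c]).cons₂ a)) (by simp)
      have hb1 : b ≠ 1 := by
        simpa using free_sub hfree
          (hsubl [b] (((List.nil_sublist [c]).cons₂ b).trans
            (List.sublist_cons_self a [b, c]))) (by simp)
      have hc1 : c ≠ 1 := by
        simpa using free_sub hfree
          (hsubl [c] ((List.sublist_cons_self b [c]).trans
            (List.sublist_cons_self a [b, c]))) (by simp)
      have hab1 : a * b ≠ 1 := by
        simpa [mul_assoc] using free_sub hfree
          (hsubl [a, b] (((List.nil_sublist [c]).cons₂ b).cons₂ a)) (by simp)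
      have hac1 : a * c ≠ 1 := by
        simpa [mul_assoc] using free_sub hfree
          (hsubl [a, c] ((List.sublist_cons_self b [c]).cons₂ a)) (by simp)
      have hbc1 : b * c ≠ 1 := by
        simpa [mul_assoc] using free_sub hfree
          (hsubl [b, c] (List.sublist_cons_self a [b, c])) (by simp)
      have habc1 : a * b * c ≠ 1 := by
        simpa [mul_assoc] using free_sub hfree
          (hsubl [a, b, c] (List.Sublist.refl _)) (by simp)
      rcases mul5 a b c ha1 hb1 hc1 hab1 hac1 hbc1 habc1 with h | h | h | h
      · left
        exact ⟨a, by rw [habc, ← h.1.trans h.2, ← h.1]; rfl⟩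
      · right
        refine ⟨a, ?_⟩
        rw [habc, ← h.1, h.2, pow_two]
        rfl
      · right
        refine ⟨a, ?_⟩
        rw [habc, ← h.1, h.2, pow_two, Multiset.pair_comm (a * a) a]
        rfl
      · right
        refine ⟨b, ?_⟩
        rw [habc, ← h.1, h.2, pow_two]
        show (b * b) ::ₘ b ::ₘ ({b} : Multiset _) =
          Multiset.replicate 2 b + {b * b}
        rw [Multiset.cons_swap]
        show b ::ₘ (b * b) ::ₘ b ::ₘ (0 : Multiset _) =
          Multiset.replicate 2 b + {b * b}
        rw [Multiset.cons_swap (b * b) b]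
        rfl
  · -- n ≥ 6
    by_cases hconst : ∀ a ∈ S, ∀ b ∈ S, a = b
    · left
      have hpos : S ≠ 0 := by
        intro h0
        rw [h0] at hS
        simp at hS
        omega
      obtain ⟨g, hg⟩ := Multiset.exists_mem_of_ne_zero hpos
      exact ⟨g, Multiset.eq_replicate.mpr ⟨hS, fun b hb => hconst b hb g hg⟩⟩
    · push_neg at hconst
      obtain ⟨a, haS, b, hbS, hab⟩ := hconst
      have hbS' : b ∈ S.erase a := (Multiset.mem_erase_of_ne (Ne.symm hab)).mpr hbS
      set R := (S.erase a).erase b with hRdef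
      have hdecomp : a ::ₘ b ::ₘ R = S := by
        rw [hRdef, Multiset.cons_erase hbS', Multiset.cons_erase haS]
      have hcardR : Multiset.card R = n - 4 := by
        have := congrArg Multiset.card hdecomp
        simp only [Multiset.card_cons, hS] at this
        omega
      have hRconst : ∀ x ∈ R, ∀ y ∈ R, x = y := by
        intro x hx y hy
        by_cases hxy : x = y
        · exact hxy
        · have hy' : y ∈ R.erase x := (Multiset.mem_erase_of_ne (Ne.symm hxy)).mpr hy
          set U := (R.erase x).erase y with hUdef
          have hdecomp2 : x ::ₘ y ::ₘ U = R := by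
            rw [hUdef, Multiset.cons_erase hy', Multiset.cons_erase hx]
          have hlist : ((a :: b :: x :: y :: U.toList :
              List (Multiplicative (ZMod n))) : Multiset _) = S := by
            have e1 : ((a :: b :: x :: y :: U.toList :
                List (Multiplicative (ZMod n))) : Multiset _) =
                a ::ₘ b ::ₘ x ::ₘ y ::ₘ U := by
              conv_rhs => rw [← Multiset.coe_toList U]
              simp only [Multiset.cons_coe]
            rw [e1, hdecomp2, hdecomp]
          exact pair_eq (by omega) hG hS hfree hab hlist
      have hRne : R ≠ 0 := by
        intro h0
        rw [h0] at hcardR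
        simp at hcardR
        omega
      obtain ⟨g, hgR⟩ := Multiset.exists_mem_of_ne_zero hRne
      have hR : R = Multiset.replicate (n - 4) g :=
        Multiset.eq_replicate.mpr ⟨hcardR, fun x hx => hRconst x hx g hgR⟩
      have e43 : n - 4 + 1 = n - 3 := by omega
      by_cases hag : a = g
      · have hbg : b ≠ g := by
          rw [← hag]
          exact Ne.symm hab
        have hstb : S = b ::ₘ Multiset.replicate (n - 3) g := by
          rw [← hdecomp, hR, hag, Multiset.cons_swap, ← e43, Multiset.replicate_succ]
        have hb2 := endgame h6 hG hS hfree hbg hstb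
        right
        refine ⟨g, ?_⟩
        rw [hstb, hb2, add_comm, Multiset.singleton_add]
      · by_cases hbg : b = g
        · have hstb : S = a ::ₘ Multiset.replicate (n - 3) g := by
            rw [← hdecomp, hR, hbg, ← e43, Multiset.replicate_succ]
          have ha2 := endgame h6 hG hS hfree hag hstb
          right
          refine ⟨g, ?_⟩
          rw [hstb, ha2, add_comm, Multiset.singleton_add]
        · exfalso
          have e65 : n - 6 + 1 = n - 5 := by omega
          have e54 : n - 5 + 1 = n - 4 := by omega
          have hlist2 : ((a :: g :: b :: g :: List.replicate (n - 6) g :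
              List (Multiplicative (ZMod n))) : Multiset _) = S := by
            have e1 : ((a :: g :: b :: g :: List.replicate (n - 6) g :
                List (Multiplicative (ZMod n))) : Multiset _) =
                a ::ₘ g ::ₘ b ::ₘ g ::ₘ Multiset.replicate (n - 6) g := by
              rw [← Multiset.coe_replicate]
              simp only [Multiset.cons_coe]
            rw [e1, ← hdecomp, hR, Multiset.cons_swap g b, ← Multiset.replicate_succ, e65,
              ← Multiset.replicate_succ, e54]
          exact hbg (pair_eq (by omega) hG hS hfree hag hlist2)
end

section
/- For n ≥ 4, in the dihedral group D_{2n}, any sequence of the form (y^t)^{n−1}(xy^s), where gcd(t, n) = 1 and 0 ≤ s ≤ n−1, is free of product-1 subsequences. -/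
open DihedralGroup

/-- Parity homomorphism on the dihedral group: rotations ↦ 0, reflections ↦ 1. -/
def dsign {n : ℕ} : DihedralGroup n →* Multiplicative (ZMod 2) where
  toFun g := match g with
    | .r _ => 1
    | .sr _ => Multiplicative.ofAdd 1
  map_one' := rfl
  map_mul' := by
    rintro (a | a) (b | b) <;>
      simp only [DihedralGroup.r_mul_r, DihedralGroup.r_mul_sr,
        DihedralGroup.sr_mul_r, DihedralGroup.sr_mul_sr] <;> decide

lemma r_pow' {n : ℕ} (a : ZMod n) (k : ℕ) : (r a : DihedralGroup n) ^ k = r (k • a) := by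
  induction k with
  | zero => simp
  | succ k ih => rw [pow_succ, ih, r_mul_r, succ_nsmul]

theorem dihedral_extremal_is_free (n : ℕ) (hn : 4 ≤ n) (t s : ℕ)
    (ht1 : 1 ≤ t) (ht2 : t ≤ n - 1) (htn : Nat.gcd t n = 1) (hs : s ≤ n - 1) :
    IsProdOneFree
      (Multiset.replicate (n - 1) (DihedralGroup.r (t : ZMod n)) +
        {DihedralGroup.sr (s : ZMod n)}) := by
  rintro ⟨T, hTS, hT0, l, hl, hprod⟩
  have hne : (r (t : ZMod n) : DihedralGroup n) ≠ sr (s : ZMod n) := by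
    simp
  set a : DihedralGroup n := r (t : ZMod n) with ha
  set b : DihedralGroup n := sr (s : ZMod n) with hb
  set k := T.count a with hk
  set m := T.count b with hm
  -- counts in S
  have hkle : k ≤ n - 1 := by
    have := Multiset.count_le_of_le a hTS
    simpa [Multiset.count_replicate, hne] using this
  have hmle : m ≤ 1 := by
    have := Multiset.count_le_of_le b hTS
    simpa [Multiset.count_replicate, hne] using this
  -- T is made of a's and b's only
  have hTeq : T = Multiset.replicate k a + Multiset.replicate m b := by
    ext c
    by_cases hca : c = a
    · subst hca
      simp [Multiset.count_replicate, hne, hk]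
    · by_cases hcb : c = b
      · subst hcb
        simp [Multiset.count_replicate, Ne.symm hne, hm]
      · have hcT : c ∉ T := by
          intro hcT
          have := Multiset.mem_of_le hTS hcT
          simp only [Multiset.mem_add, Multiset.mem_replicate, Multiset.mem_singleton] at this
          rcases this with h | h
          · exact hca h.2
          · exact hcb h
        simp [Multiset.count_eq_zero_of_notMem hcT, Multiset.count_replicate,
          Ne.symm hca, Ne.symm hcb]
  -- parity: m = 0
  have hm0 : m = 0 := by
    have hmap : dsign l.prod = (Multiplicative.ofAdd (1 : ZMod 2)) ^ m := by
      rw [← List.prod_hom l dsign]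
      have : (l.map dsign : Multiset (Multiplicative (ZMod 2)))
          = (T.map dsign) := by rw [← hl]; rfl
      have hmprod : (l.map dsign).prod = ((T.map dsign)).prod := by
        rw [← Multiset.prod_coe, this]
      rw [hmprod, hTeq]
      have h1 : dsign a = 1 := rfl
      have h2 : dsign b = Multiplicative.ofAdd (1 : ZMod 2) := rfl
      simp [Multiset.map_replicate, Multiset.prod_replicate, h1, h2]
    rw [hprod, map_one] at hmap
    interval_cases m
    · rfl
    · exfalso; revert hmap; decide
  rw [hm0] at hTeq
  simp only [Multiset.replicate_zero, add_zero] at hTeq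
  -- l is a replicate list
  have hlrep : l = List.replicate k a := by
    rw [← List.perm_replicate]
    rw [← Multiset.coe_eq_coe, Multiset.coe_replicate, hl, hTeq]
  have hk0 : k ≠ 0 := by
    intro h
    rw [h, Multiset.replicate_zero] at hTeq
    exact hT0 hTeq
  -- compute the product
  rw [hlrep, List.prod_replicate, ha, r_pow'] at hprod
  rw [DihedralGroup.one_def] at hprod
  have hzero : (k : ZMod n) * (t : ZMod n) = 0 := by
    have := DihedralGroup.r.injEq (n := n) _ _ ▸ hprod
    simpa [nsmul_eq_mul] using DihedralGroup.r.inj hprod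
  have hunit : IsUnit ((t : ZMod n)) := (ZMod.isUnit_iff_coprime t n).mpr htn
  have hkz : (k : ZMod n) = 0 := by
    exact (IsUnit.mul_left_eq_zero hunit).mp hzero
  have hdvd : n ∣ k := by
    rwa [ZMod.natCast_eq_zero_iff] at hkz
  have : n ≤ k := Nat.le_of_dvd (Nat.pos_of_ne_zero hk0) hdvd
  omega
end

section
/- For n ≥ 4, if S is a sequence of n elements in the dihedral group D_{2n} that is free of product-1 subsequences, then S = (y^t)^{n−1}(xy^s) for some t with 1 ≤ t ≤ n−1, gcd(t, n) = 1, and some 0 ≤ s ≤ n−1. -/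
open Multiset

section InvDihAux

variable {n : ℕ}

/-- zero-sum-free multiset over `ZMod n`. -/
def ZSFree (B : Multiset (ZMod n)) : Prop :=
  ∀ U : Multiset (ZMod n), U ≤ B → U ≠ 0 → U.sum ≠ 0

lemma ZSFree.mono {B C : Multiset (ZMod n)} (h : C ≤ B) (hB : ZSFree B) : ZSFree C :=
  fun U hU => hB U (hU.trans h)

lemma r_list_prod (l : List (ZMod n)) :
    (l.map DihedralGroup.r).prod = DihedralGroup.r l.sum := by
  induction l with
  | nil => simp
  | cons a l ih => simp [ih, DihedralGroup.r_mul_r]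

lemma block_sum {B : Multiset (ZMod n)} (hB : ZSFree B) (l : List (ZMod n))
    (hl : (l : Multiset (ZMod n)) ≤ B) {i j : ℕ} (hij : i < j) (hj : j ≤ l.length) :
    (l.take i).sum ≠ (l.take j).sum := by
  intro heq
  set m := (l.drop i).take (j - i) with hm
  have htj : l.take j = l.take i ++ m := by
    rw [hm, ← List.take_add]
    congr 1
    omega
  rw [htj, List.sum_append, left_eq_add] at heq
  have hsub : (m : Multiset (ZMod n)) ≤ B :=
    le_trans (Multiset.coe_le.mpr
      (((List.take_sublist _ _).trans (List.drop_sublist _ _)).subperm)) hl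
  have hlen : m.length = j - i := by
    simp only [hm, List.length_take, List.length_drop]
    omega
  have hne : (m : Multiset (ZMod n)) ≠ 0 := by
    simpa [Multiset.coe_eq_zero] using List.ne_nil_of_length_pos (by omega)
  exact hB _ hsub hne (by simpa using heq)

lemma zsfree_card_lt [NeZero n] {B : Multiset (ZMod n)} (hB : ZSFree B) :
    Multiset.card B < n := by
  by_contra h
  push_neg at h
  set l := B.toList with hl
  have hlB : (l : Multiset (ZMod n)) = B := Multiset.coe_toList B
  have hlen : n ≤ l.length := by
    have h2 := congrArg Multiset.card hlB
    simp only [Multiset.coe_card] at h2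
    omega
  have hcard : Fintype.card (ZMod n) < Fintype.card (Fin (n + 1)) := by
    simp [ZMod.card]
  obtain ⟨i, j, hne, heq⟩ := Fintype.exists_ne_map_eq_of_card_lt
    (fun i : Fin (n + 1) => (l.take (i : ℕ)).sum) hcard
  rcases hne.lt_or_gt with h1 | h1
  · exact block_sum hB l (le_of_eq hlB) h1 (le_trans (by omega) hlen) heq
  · exact block_sum hB l (le_of_eq hlB) h1 (le_trans (by omega) hlen) heq.symm

/-- the finset of all submultiset sums (including the empty one). -/
def msums (B : Multiset (ZMod n)) : Finset (ZMod n) :=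
  B.powerset.toFinset.image Multiset.sum

lemma mem_msums {B : Multiset (ZMod n)} {x : ZMod n} :
    x ∈ msums B ↔ ∃ U ≤ B, U.sum = x := by
  simp [msums, Multiset.mem_powerset]

lemma msums_card {B : Multiset (ZMod n)} (hB : ZSFree B) :
    Multiset.card B + 1 ≤ (msums B).card := by
  induction B using Multiset.induction_on with
  | empty =>
      have : msums (0 : Multiset (ZMod n)) = {0} := by
        ext x
        simp only [mem_msums, Finset.mem_singleton, Multiset.le_zero]
        constructor
        · rintro ⟨U, rfl, rfl⟩; simp
        · rintro rfl; exact ⟨0, rfl, rfl⟩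
      simp [this]
  | cons b B ih =>
      have hB' : ZSFree B := hB.mono (Multiset.le_cons_self _ _)
      have h1 : msums B ⊆ msums (b ::ₘ B) := by
        intro x hx
        obtain ⟨U, hU, hUs⟩ := mem_msums.mp hx
        exact mem_msums.mpr ⟨U, hU.trans (Multiset.le_cons_self _ _), hUs⟩
      have h2 : (msums B).image (b + ·) ⊆ msums (b ::ₘ B) := by
        intro x hx
        obtain ⟨y, hy, rfl⟩ := Finset.mem_image.mp hx
        obtain ⟨U, hU, hUs⟩ := mem_msums.mp hy
        exact mem_msums.mpr ⟨b ::ₘ U, Multiset.cons_le_cons _ hU, by simp [hUs]⟩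
      by_contra hc
      push_neg at hc
      have hc' : (msums (b ::ₘ B)).card ≤ (msums B).card := by
        have := ih hB'
        simp only [Multiset.card_cons] at hc
        omega
      have he : msums (b ::ₘ B) = msums B :=
        (Finset.eq_of_subset_of_card_le h1 hc').symm
      have h3 : (msums B).image (b + ·) ⊆ msums B := he ▸ h2
      have h4 : (msums B).image (b + ·) = msums B :=
        Finset.eq_of_subset_of_card_le h3
          (le_of_eq (Finset.card_image_of_injective _ (add_right_injective b)).symm)
      have h0 : (0 : ZMod n) ∈ msums B := mem_msums.mpr ⟨0, Multiset.zero_le _, rfl⟩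
      rw [← h4] at h0
      obtain ⟨y, hy, hy0⟩ := Finset.mem_image.mp h0
      obtain ⟨U, hU, rfl⟩ := mem_msums.mp hy
      exact hB (b ::ₘ U) (Multiset.cons_le_cons _ hU) (by simp)
        (by simpa using hy0)

lemma inverse_cyclic_s9 [NeZero n] (hn : 4 ≤ n) {B : Multiset (ZMod n)}
    (hB : ZSFree B) (hcard : Multiset.card B = n - 1) :
    ∃ t : ZMod n, t ≠ 0 ∧ B = Multiset.replicate (n - 1) t := by
  have hall : ∀ a ∈ B, ∀ b ∈ B, a = b := by
    intro a ha b hb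
    by_contra hab
    have hbB : b ∈ B.erase a := (Multiset.mem_erase_of_ne (Ne.symm hab)).mpr hb
    set C := (B.erase a).erase b with hC
    have hBeq : B = a ::ₘ b ::ₘ C := by
      rw [hC, Multiset.cons_erase hbB, Multiset.cons_erase ha]
    set L := b :: a :: C.toList with hL
    have hLB : (L : Multiset (ZMod n)) = B := by
      rw [hL, hBeq]
      simp only [← Multiset.cons_coe, Multiset.coe_toList]
      rw [Multiset.cons_swap]
    have hlen : L.length = n - 1 := by
      have h2 := congrArg Multiset.card hLB
      simpa [hcard] using h2
    have hinj : Function.Injective (fun i : Fin n => (L.take (i : ℕ)).sum) := by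
      intro i j hij
      by_contra hne
      have hne' : (i : ℕ) ≠ (j : ℕ) := fun h => hne (Fin.ext h)
      rcases hne'.lt_or_gt with h1 | h1
      · exact block_sum hB L (le_of_eq hLB) h1 (by omega) hij
      · exact block_sum hB L (le_of_eq hLB) h1 (by omega) hij.symm
    have hsurj : Function.Surjective (fun i : Fin n => (L.take (i : ℕ)).sum) := by
      have := (Fintype.bijective_iff_injective_and_card
        (fun i : Fin n => (L.take (i : ℕ)).sum)).mpr ⟨hinj, by simp [ZMod.card]⟩
      exact this.2
    obtain ⟨i, hi⟩ := hsurj a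
    simp only at hi
    have hane : a ≠ 0 := by
      intro h
      exact hB {a} (Multiset.singleton_le.mpr ha) (by simp) (by simp [h])
    have hbne : b ≠ 0 := by
      intro h
      exact hB {b} (Multiset.singleton_le.mpr hb) (by simp) (by simp [h])
    match hiv : (i : ℕ) with
    | 0 => rw [hiv] at hi; simp at hi; exact hane hi.symm
    | 1 =>
        rw [hiv] at hi
        simp [hL] at hi
        exact hab hi.symm
    | (m + 2) =>
        rw [hiv] at hi
        rw [hL] at hi
        simp only [List.take_succ_cons, List.sum_cons] at hi
        have hsum0 : b + (C.toList.take m).sum = 0 := by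
          have : b + (a + (C.toList.take m).sum) = a := hi
          have := add_left_cancel (a := a)
            (by linear_combination this : a + (b + (C.toList.take m).sum) = a + 0)
          exact this
        have hsub : (b ::ₘ ↑(C.toList.take m) : Multiset (ZMod n)) ≤ B := by
          rw [hBeq]
          refine le_trans (Multiset.cons_le_cons b ?_) (Multiset.le_cons_self _ _)
          refine le_trans ?_ (le_of_eq (Multiset.coe_toList C))
          exact Multiset.coe_le.mpr (List.take_sublist _ _).subperm
        exact hB _ hsub (by simp) (by simpa using hsum0)
  have hBne : B ≠ 0 := by
    intro h
    rw [h] at hcard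
    simp at hcard
    omega
  obtain ⟨t, ht⟩ := Multiset.exists_mem_of_ne_zero hBne
  refine ⟨t, ?_, ?_⟩
  · intro h
    exact hB {t} (Multiset.singleton_le.mpr ht) (by simp) (by simp [h])
  · exact Multiset.eq_replicate.mpr ⟨hcard, fun b hb => hall b hb t ht⟩

lemma dihedral_decomp (S : Multiset (DihedralGroup n)) :
    ∃ B A : Multiset (ZMod n),
      S = B.map DihedralGroup.r + A.map DihedralGroup.sr := by
  induction S using Multiset.induction_on with
  | empty => exact ⟨0, 0, by simp⟩
  | cons g S ih =>
      obtain ⟨B, A, h⟩ := ih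
      cases g with
      | r i =>
          refine ⟨i ::ₘ B, A, ?_⟩
          rw [h, Multiset.map_cons, Multiset.cons_add]
      | sr i =>
          refine ⟨B, i ::ₘ A, ?_⟩
          rw [h, Multiset.map_cons, add_comm, ← Multiset.cons_add, add_comm]

end InvDihAux

theorem inverse_dihedral (n : ℕ) (hn : 4 ≤ n)
    (S : Multiset (DihedralGroup n)) (hS : Multiset.card S = n)
    (hfree : IsProdOneFree S) :
    ∃ t s : ℕ, 1 ≤ t ∧ t ≤ n - 1 ∧ Nat.gcd t n = 1 ∧ s ≤ n - 1 ∧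
      S = Multiset.replicate (n - 1) (DihedralGroup.r (t : ZMod n)) +
        {DihedralGroup.sr (s : ZMod n)} := by
  have hNZ : NeZero n := ⟨by omega⟩
  obtain ⟨B, Am, hdec⟩ := dihedral_decomp S
  have hfree' : ∀ l : List (DihedralGroup n),
      (↑l : Multiset (DihedralGroup n)) ≤ S → l ≠ [] → l.prod ≠ 1 := by
    intro l hl hne hprod
    exact hfree ⟨↑l, hl, by simpa using hne, l, rfl, hprod⟩
  have hsub : ∀ V U : Multiset (ZMod n), V ≤ Am → U ≤ B →
      V.map DihedralGroup.sr + U.map DihedralGroup.r ≤ S := by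
    intro V U hV hU
    rw [hdec, add_comm (Multiset.map DihedralGroup.sr V)]
    exact add_le_add (Multiset.map_le_map hU) (Multiset.map_le_map hV)
  have hZSF : ZSFree B := by
    intro U hU hne hsum
    refine hfree' (U.toList.map DihedralGroup.r) ?_ (by simp [hne]) ?_
    · have h1 : (↑(U.toList.map DihedralGroup.r) : Multiset (DihedralGroup n))
          = U.map DihedralGroup.r := by
        rw [← Multiset.map_coe, Multiset.coe_toList]
      rw [h1]
      simpa using hsub 0 U (Multiset.zero_le _) hU
    · rw [r_list_prod]
      rw [Multiset.sum_toList, hsum, ← DihedralGroup.one_def]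
  have hnodup : Am.Nodup := by
    rw [Multiset.nodup_iff_count_le_one]
    by_contra h
    push_neg at h
    obtain ⟨a, ha⟩ := h
    have h2 : Multiset.replicate 2 a ≤ Am :=
      Multiset.le_count_iff_replicate_le.mp (by omega)
    refine hfree' [DihedralGroup.sr a, DihedralGroup.sr a] ?_ (by simp) ?_
    · have h1 : (↑[DihedralGroup.sr a, DihedralGroup.sr a] : Multiset (DihedralGroup n))
          = (Multiset.replicate 2 a).map DihedralGroup.sr := by
        simp [Multiset.replicate_succ]
        rfl
      rw [h1]
      simpa using hsub (Multiset.replicate 2 a) 0 h2 (Multiset.zero_le _)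
    · simp [DihedralGroup.sr_mul_sr, ← DihedralGroup.one_def]
  have hcards : Multiset.card B + Multiset.card Am = n := by
    have h2 := congrArg Multiset.card hdec
    simp only [Multiset.card_add, Multiset.card_map] at h2
    omega
  have hpairle : ∀ u v : ZMod n, u ∈ Am → v ∈ Am → u ≠ v →
      ({u, v} : Multiset (ZMod n)) ≤ Am := by
    intro u v hu hv huv
    have hv' : v ∈ Am.erase u := (Multiset.mem_erase_of_ne (Ne.symm huv)).mpr hv
    have : u ::ₘ ({v} : Multiset (ZMod n)) ≤ u ::ₘ Am.erase u :=
      Multiset.cons_le_cons u (Multiset.singleton_le.mpr hv')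
    rwa [Multiset.cons_erase hu] at this
  rcases Nat.lt_or_ge (Multiset.card Am) 2 with hk2 | hk2
  · rcases Nat.eq_zero_or_pos (Multiset.card Am) with hk0 | hk1
    · exfalso
      have := zsfree_card_lt hZSF
      omega
    · -- exactly one reflection
      have hk1' : Multiset.card Am = 1 := by omega
      obtain ⟨a, rfl⟩ := Multiset.card_eq_one.mp hk1'
      have hcardB : Multiset.card B = n - 1 := by
        simp only [Multiset.card_singleton] at hcards
        omega
      obtain ⟨t0, ht0, hBrep⟩ := inverse_cyclic_s9 hn hZSF hcardB
      have hval0 : t0.val ≠ 0 := fun h => ht0 ((ZMod.val_eq_zero t0).mp h)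
      have hgcd : Nat.gcd t0.val n = 1 := by
        by_contra hg
        set d := Nat.gcd t0.val n with hd
        have hdn : d ∣ n := Nat.gcd_dvd_right _ _
        have hdt : d ∣ t0.val := Nat.gcd_dvd_left _ _
        have hd0 : d ≠ 0 := by
          intro h
          rw [hd] at h
          exact hval0 (Nat.eq_zero_of_gcd_eq_zero_left h)
        have hd2 : 2 ≤ d := by omega
        set m := n / d with hm
        have hdlen : d ≤ n := Nat.le_of_dvd (by omega) hdn
        have hm1 : 1 ≤ m := (Nat.one_le_div_iff (by omega)).mpr hdlen
        have hmn : m ≤ n - 1 := by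
          have : m < n := Nat.div_lt_self (by omega) (by omega)
          omega
        have hrep : Multiset.replicate m t0 ≤ B := by
          rw [hBrep]
          exact Multiset.replicate_le_replicate t0 |>.mpr hmn
        obtain ⟨t', ht'⟩ := hdt
        have hsum : (Multiset.replicate m t0).sum = 0 := by
          rw [Multiset.sum_replicate, nsmul_eq_mul]
          have h1 : ((m : ℕ) : ZMod n) * t0 = ((m * t0.val : ℕ) : ZMod n) := by
            push_cast
            rw [ZMod.natCast_val, ZMod.cast_id]
          rw [h1]
          have h2 : m * t0.val = n * t' := by
            rw [ht', hm, ← Nat.mul_assoc, Nat.div_mul_cancel hdn]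
          rw [h2]
          push_cast
          simp [ZMod.natCast_self]
        exact hZSF _ hrep (by
          intro h
          have := congrArg Multiset.card h
          simp at this
          omega) hsum
      refine ⟨t0.val, a.val, by omega, ?_, hgcd, ?_, ?_⟩
      · have := ZMod.val_lt t0; omega
      · have := ZMod.val_lt a; omega
      · rw [hdec, hBrep]
        rw [Multiset.map_replicate, Multiset.map_singleton]
        rw [ZMod.natCast_rightInverse t0, ZMod.natCast_rightInverse a]
  · -- at least two reflections: contradiction
    exfalso
    have hword2 : ∀ u v : ZMod n, u ∈ Am → v ∈ Am → u ≠ v →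
        ∀ U : Multiset (ZMod n), U ≤ B → U.sum ≠ u - v := by
      intro u v hu hv huv U hU hsum
      refine hfree' (DihedralGroup.sr v ::
        (U.toList.map DihedralGroup.r ++ [DihedralGroup.sr u])) ?_ (by simp) ?_
      · have hcoe : (↑(DihedralGroup.sr v ::
            (U.toList.map DihedralGroup.r ++ [DihedralGroup.sr u])) :
            Multiset (DihedralGroup n))
            = DihedralGroup.sr v ::ₘ (U.map DihedralGroup.r + {DihedralGroup.sr u}) := by
          rw [← Multiset.cons_coe, ← Multiset.coe_add, ← Multiset.map_coe,
            Multiset.coe_toList, Multiset.coe_singleton]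
        have hrhs : Multiset.map DihedralGroup.sr ({v, u} : Multiset (ZMod n))
            + Multiset.map DihedralGroup.r U
            = DihedralGroup.sr v ::ₘ (U.map DihedralGroup.r + {DihedralGroup.sr u}) := by
          simp only [Multiset.insert_eq_cons, Multiset.map_cons, Multiset.map_singleton,
            ← Multiset.singleton_add, Multiset.map_add]
          ext x
          simp only [Multiset.count_add]
          ring
        rw [hcoe, ← hrhs]
        exact hsub _ _ (hpairle v u hv hu (Ne.symm huv)) hU
      · rw [List.prod_cons, List.prod_append, r_list_prod, List.prod_singleton,
          Multiset.sum_toList, DihedralGroup.r_mul_sr, DihedralGroup.sr_mul_sr]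
        have hz : u - U.sum - v = 0 := by rw [hsum]; ring
        rw [hz, ← DihedralGroup.one_def]
    set Afin := Am.toFinset with hAfin
    have hAcard : Afin.card = Multiset.card Am :=
      Multiset.toFinset_card_eq_card_iff_nodup.mpr hnodup
    set Δ : Finset (ZMod n) := Finset.image₂ (fun x y => x - y) Afin Afin with hΔ
    have hmemΔ : ∀ x : ZMod n, x ∈ Δ ↔ ∃ u ∈ Afin, ∃ v ∈ Afin, u - v = x := by
      intro x; rw [hΔ]; exact Finset.mem_image₂
    have hkey : ∀ x : ZMod n, x ∈ Δ → x ∈ msums B → x = 0 := by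
      intro x hxΔ hxS
      by_contra hx0
      obtain ⟨u, hu, v, hv, rfl⟩ := (hmemΔ x).mp hxΔ
      obtain ⟨U, hU, hUs⟩ := mem_msums.mp hxS
      exact hword2 u v (Multiset.mem_toFinset.mp hu) (Multiset.mem_toFinset.mp hv)
        (fun h => hx0 (by rw [h, sub_self])) U hU hUs
    obtain ⟨a1, ha1, a2, ha2, hne12⟩ := Finset.one_lt_card.mp
      (show 1 < Afin.card by omega)
    have hΔlow : Multiset.card Am ≤ Δ.card := by
      have hsubs : Afin.image (fun x => x - a1) ⊆ Δ := by
        intro x hx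
        obtain ⟨y, hy, rfl⟩ := Finset.mem_image.mp hx
        exact (hmemΔ _).mpr ⟨y, hy, a1, ha1, rfl⟩
      calc Multiset.card Am = (Afin.image (fun x => x - a1)).card := by
            rw [Finset.card_image_of_injective _ (sub_left_injective), hAcard]
        _ ≤ Δ.card := Finset.card_le_card hsubs
    rcases Nat.lt_or_ge (Multiset.card Am) n with hklt | hkge
    · -- 2 ≤ k ≤ n - 1 : main argument
      have hcardB : 0 < Multiset.card B := by omega
      have hinter : Δ ∩ msums B = {0} := by
        ext x
        simp only [Finset.mem_inter, Finset.mem_singleton]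
        constructor
        · rintro ⟨h1, h2⟩; exact hkey x h1 h2
        · rintro rfl
          exact ⟨(hmemΔ _).mpr ⟨a1, ha1, a1, ha1, sub_self a1⟩,
            mem_msums.mpr ⟨0, Multiset.zero_le _, rfl⟩⟩
      have hScard : Multiset.card B + 1 ≤ (msums B).card := msums_card hZSF
      have hcup : (Δ ∪ msums B).card + 1 = Δ.card + (msums B).card := by
        rw [← Finset.card_union_add_card_inter, hinter, Finset.card_singleton]
      have hcup_le : (Δ ∪ msums B).card ≤ n :=
        le_trans (Finset.card_le_univ _) (le_of_eq (by simp [ZMod.card]))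
      have hΔcard : Δ.card = Multiset.card Am := by omega
      have hSav : (msums B).card = Multiset.card B + 1 := by omega
      have huniv : Δ ∪ msums B = Finset.univ := by
        apply Finset.eq_univ_of_card
        rw [ZMod.card]
        omega
      have hΔeq : ∀ a ∈ Afin, Δ = Afin.image (fun x => x - a) := by
        intro a ha
        refine (Finset.eq_of_subset_of_card_le ?_ ?_).symm
        · intro x hx
          obtain ⟨y, hy, rfl⟩ := Finset.mem_image.mp hx
          exact (hmemΔ _).mpr ⟨y, hy, a, ha, rfl⟩
        · rw [Finset.card_image_of_injective _ (sub_left_injective), hAcard, hΔcard]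
      have hneg : ∀ d ∈ Δ, -d ∈ Δ := by
        intro d hd
        rw [hΔeq a1 ha1, Finset.mem_image] at hd
        obtain ⟨y, hy, rfl⟩ := hd
        rw [hΔeq y hy, Finset.mem_image]
        exact ⟨a1, ha1, by ring⟩
      have hadd : ∀ d ∈ Δ, ∀ e ∈ Δ, d + e ∈ Δ := by
        intro d hd e he
        rw [hΔeq a1 ha1, Finset.mem_image] at he
        obtain ⟨y, hy, rfl⟩ := he
        rw [hΔeq y hy, Finset.mem_image] at hd
        obtain ⟨z, hz, rfl⟩ := hd
        rw [hΔeq a1 ha1, Finset.mem_image]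
        exact ⟨z, hz, by ring⟩
      set g := a2 - a1 with hg
      have hg0 : g ≠ 0 := sub_ne_zero.mpr (Ne.symm hne12)
      have hgΔ : g ∈ Δ := (hmemΔ _).mpr ⟨a2, ha2, a1, ha1, rfl⟩
      obtain ⟨c, hc⟩ := Multiset.card_pos_iff_exists_mem.mp hcardB
      have hcS : c ∈ msums B :=
        mem_msums.mpr ⟨{c}, Multiset.singleton_le.mpr hc, Multiset.sum_singleton c⟩
      have hc0 : c ≠ 0 := by
        intro h
        exact hZSF {c} (Multiset.singleton_le.mpr hc) (by simp)
          (by simp [h])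
      have hcΔ : c ∉ Δ := fun h => hc0 (hkey c h hcS)
      have hgc : g + c ∉ Δ := by
        intro h
        apply hcΔ
        have := hadd _ h _ (hneg _ hgΔ)
        simpa using this
      have hgcS : g + c ∈ msums B := by
        have hx : g + c ∈ Δ ∪ msums B := huniv ▸ Finset.mem_univ _
        rcases Finset.mem_union.mp hx with h | h
        · exact absurd h hgc
        · exact h
      obtain ⟨U, hU, hUs⟩ := mem_msums.mp hgcS
      by_cases hcU : c ∈ U
      · obtain ⟨U', rfl⟩ : ∃ U', U = c ::ₘ U' := ⟨U.erase c, (Multiset.cons_erase hcU).symm⟩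
        have hU's : U'.sum = g := by
          rw [Multiset.sum_cons] at hUs
          have : c + U'.sum = g + c := hUs
          linear_combination this
        have hgS : g ∈ msums B :=
          mem_msums.mpr ⟨U', le_trans (Multiset.le_cons_self _ _) hU, hU's⟩
        exact hg0 (hkey g hgΔ hgS)
      · have hcU' : c ::ₘ U ≤ B := by
          rw [Multiset.le_iff_count]
          intro x
          rcases eq_or_ne x c with rfl | hx
          · rw [Multiset.count_cons_self]
            have h1 : Multiset.count x U = 0 := Multiset.count_eq_zero.mpr hcU
            have h2 : 1 ≤ Multiset.count x B := Multiset.one_le_count_iff_mem.mpr hc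
            omega
          · rw [Multiset.count_cons_of_ne hx]
            exact Multiset.le_iff_count.mp hU x
        refine hfree' (DihedralGroup.sr a1 :: (U.toList.map DihedralGroup.r ++
          [DihedralGroup.sr a2, DihedralGroup.r c])) ?_ (by simp) ?_
        · have hcoe : (↑(DihedralGroup.sr a1 :: (U.toList.map DihedralGroup.r ++
              [DihedralGroup.sr a2, DihedralGroup.r c])) : Multiset (DihedralGroup n))
              = DihedralGroup.sr a1 ::ₘ (U.map DihedralGroup.r +
                (DihedralGroup.sr a2 ::ₘ {DihedralGroup.r c})) := by
            rw [← Multiset.cons_coe, ← Multiset.coe_add, ← Multiset.map_coe,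
              Multiset.coe_toList]
            rfl
          have hrhs : Multiset.map DihedralGroup.sr ({a1, a2} : Multiset (ZMod n))
              + Multiset.map DihedralGroup.r (c ::ₘ U)
              = DihedralGroup.sr a1 ::ₘ (U.map DihedralGroup.r +
                (DihedralGroup.sr a2 ::ₘ {DihedralGroup.r c})) := by
            simp only [Multiset.insert_eq_cons, Multiset.map_cons, Multiset.map_singleton,
              ← Multiset.singleton_add, Multiset.map_add]
            ext x
            simp only [Multiset.count_add]
            ring
          rw [hcoe, ← hrhs]
          exact hsub _ _ (hpairle a1 a2 (Multiset.mem_toFinset.mp ha1)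
            (Multiset.mem_toFinset.mp ha2) hne12) hcU'
        · rw [List.prod_cons, List.prod_append, r_list_prod, Multiset.sum_toList]
          rw [List.prod_cons, List.prod_singleton]
          rw [DihedralGroup.sr_mul_r, DihedralGroup.r_mul_sr, DihedralGroup.sr_mul_sr]
          have hz : a2 + c - U.sum - a1 = 0 := by
            rw [hUs, hg]
            ring
          rw [hz, ← DihedralGroup.one_def]
    · -- k = n : all elements are reflections
      have hAuniv : Afin = Finset.univ := by
        apply Finset.eq_univ_of_card
        rw [ZMod.card, hAcard]
        omega
      have hmemAm : ∀ x : ZMod n, x ∈ Am := by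
        intro x
        have h1 : x ∈ Afin := by rw [hAuniv]; exact Finset.mem_univ x
        exact Multiset.mem_toFinset.mp h1
      have hvalinj : ∀ a b : ℕ, a < n → b < n → ((a : ZMod n) = (b : ZMod n)) → a = b := by
        intro a b ha hb h
        have := congrArg ZMod.val h
        rwa [ZMod.val_cast_of_lt ha, ZMod.val_cast_of_lt hb] at this
      have hne' : ∀ a b : ℕ, a < n → b < n → a ≠ b → ((a : ZMod n) ≠ (b : ZMod n)) :=
        fun a b ha hb hab h => hab (hvalinj a b ha hb h)
      set x0 : ZMod n := ((0 : ℕ) : ZMod n) with hx0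
      set x1 : ZMod n := ((1 : ℕ) : ZMod n) with hx1
      set x2 : ZMod n := ((2 : ℕ) : ZMod n) with hx2
      set x3 : ZMod n := ((3 : ℕ) : ZMod n) with hx3
      have h10 := hne' 1 0 (by omega) (by omega) (by omega)
      have h12 := hne' 1 2 (by omega) (by omega) (by omega)
      have h13 := hne' 1 3 (by omega) (by omega) (by omega)
      have h02 := hne' 0 2 (by omega) (by omega) (by omega)
      have h03 := hne' 0 3 (by omega) (by omega) (by omega)
      have h23 := hne' 2 3 (by omega) (by omega) (by omega)
      have hnodup4 : ({x1, x0, x2, x3} : Multiset (ZMod n)).Nodup := by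
        simp only [Multiset.insert_eq_cons, Multiset.nodup_cons, Multiset.mem_cons,
          Multiset.mem_singleton, Multiset.nodup_singleton, and_true]
        refine ⟨?_, ?_, ?_⟩
        · push_neg
          exact ⟨h10, h12, h13⟩
        · push_neg
          exact ⟨h02, h03⟩
        · exact h23
      have hle4 : ({x1, x0, x2, x3} : Multiset (ZMod n)) ≤ Am :=
        (Multiset.le_iff_subset hnodup4).mpr (fun x _ => hmemAm x)
      refine hfree' [DihedralGroup.sr x1, DihedralGroup.sr x0,
        DihedralGroup.sr x2, DihedralGroup.sr x3] ?_ (by simp) ?_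
      · have hcoe : (↑[DihedralGroup.sr x1, DihedralGroup.sr x0,
            DihedralGroup.sr x2, DihedralGroup.sr x3] : Multiset (DihedralGroup n))
            = Multiset.map DihedralGroup.sr ({x1, x0, x2, x3} : Multiset (ZMod n)) := by
          simp only [Multiset.insert_eq_cons, Multiset.map_cons, Multiset.map_singleton]
          rfl
        rw [hcoe]
        simpa using hsub _ 0 hle4 (Multiset.zero_le _)
      · rw [List.prod_cons, List.prod_cons, List.prod_cons, List.prod_singleton,
          DihedralGroup.sr_mul_sr, DihedralGroup.sr_mul_r, DihedralGroup.sr_mul_sr]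
        have hz : x0 + (x3 - x2) - x1 = 0 := by
          rw [hx0, hx1, hx2, hx3]
          push_cast
          ring
        rw [hz, ← DihedralGroup.one_def]
end

section
/- In the dihedral group D_6 (n = 3), a sequence S of 3 elements is free of product-1 subsequences if and only if S = (y^t, y^t, xy^ν) with t ∈ {1, 2} and ν ∈ {0, 1, 2}, or S = (x, xy, xy²). -/
def Checks {G : Type*} [Group G] (L : List G) : Prop :=
  ∀ l ∈ L.sublists, ∀ p ∈ l.permutations', p ≠ [] → p.prod ≠ 1

instance {G : Type*} [Group G] [DecidableEq G] (L : List G) : Decidable (Checks L) := by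
  unfold Checks; infer_instance

lemma isProdOneFree_coe_iff {G : Type*} [Group G] (L : List G) :
    IsProdOneFree (L : Multiset G) ↔ Checks L := by
  constructor
  · intro h l hl p hp hpne hprod
    rw [List.mem_sublists] at hl
    rw [List.mem_permutations'] at hp
    exact h ⟨(p : Multiset G), by
      rw [Multiset.coe_le]; exact hp.subperm.trans hl.subperm
      , by simpa using hpne, p, rfl, hprod⟩
  · rintro h ⟨T, hTS, hT0, l, rfl, hprod⟩
    rw [Multiset.coe_le] at hTS
    obtain ⟨l', hl'p, hl's⟩ := hTS
    exact h l' (List.mem_sublists.mpr hl's) l (List.mem_permutations'.mpr hl'p.symm) (by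
      intro hnil; exact hT0 (by simp [hnil])) hprod

theorem inverse_dihedral_six (S : Multiset (DihedralGroup 3))
    (hS : Multiset.card S = 3) :
    IsProdOneFree S ↔
      ((∃ t ν : ZMod 3, (t = 1 ∨ t = 2) ∧
          S = {DihedralGroup.r t, DihedralGroup.r t, DihedralGroup.sr ν}) ∨
        S = {DihedralGroup.sr 0, DihedralGroup.sr 1, DihedralGroup.sr 2}) := by
  obtain ⟨a, b, c, rfl⟩ := Multiset.card_eq_three.mp hS
  have : ({a, b, c} : Multiset (DihedralGroup 3)) = ([a, b, c] : List (DihedralGroup 3)) := rfl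
  rw [this, isProdOneFree_coe_iff]
  revert a b c
  decide
end

section
/- For n ≥ 3, every sequence in the dihedral group D_{2n} consisting of n−2 copies of y^t (with gcd(t, n) = 1) together with two elements xy^u and xy^v has a nonempty subsequence with product 1. -/
open DihedralGroup in
lemma r_pow_aux {n : ℕ} (a : ZMod n) (m : ℕ) :
    (DihedralGroup.r a) ^ m = r ((m : ZMod n) * a) := by
  induction m with
  | zero => simp
  | succ k ih => rw [pow_succ, ih, r_mul_r]; push_cast; ring_nf

theorem dihedral_case_c1 (n : ℕ) (hn : 3 ≤ n) (t : ℕ) (htn : Nat.gcd t n = 1)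
    (u v : ZMod n) :
    ¬ IsProdOneFree
      (Multiset.replicate (n - 2) (DihedralGroup.r (t : ZMod n)) +
        {DihedralGroup.sr u, DihedralGroup.sr v}) := by
  haveI : NeZero n := ⟨by omega⟩
  intro h
  apply h
  have hunit : IsUnit (t : ZMod n) := by
    rw [ZMod.isUnit_iff_coprime]; exact htn
  have hinv : (t : ZMod n) * (t : ZMod n)⁻¹ = 1 := ZMod.mul_inv_of_unit _ hunit
  set k : ℕ := ((t : ZMod n)⁻¹ * (v - u)).val with hk
  have hkcast : (k : ZMod n) = (t : ZMod n)⁻¹ * (v - u) := by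
    rw [hk, ZMod.natCast_val, ZMod.cast_id]
  have hkt : (k : ZMod n) * (t : ZMod n) = v - u := by
    rw [hkcast, mul_comm ((t : ZMod n)⁻¹) _, mul_assoc,
      mul_comm ((t : ZMod n)⁻¹) _, hinv, mul_one]
  have hklt : k < n := ZMod.val_lt _
  by_cases hcase : k ≤ n - 2
  · -- use sr u :: replicate k (r t) ++ [sr v]
    refine ⟨Multiset.replicate k (DihedralGroup.r (t : ZMod n)) +
      {DihedralGroup.sr u, DihedralGroup.sr v}, ?_, ?_,
      DihedralGroup.sr u :: (List.replicate k (DihedralGroup.r (t : ZMod n)) ++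
        [DihedralGroup.sr v]), ?_, ?_⟩
    · exact add_le_add ((Multiset.replicate_le_replicate _).mpr hcase) le_rfl
    · simp
    · rw [← Multiset.cons_coe, ← Multiset.coe_add, Multiset.coe_replicate]
      simp only [Multiset.insert_eq_cons, ← Multiset.singleton_add, Multiset.coe_singleton]
      ac_rfl
    · rw [List.prod_cons, List.prod_append, List.prod_replicate, r_pow_aux,
        List.prod_singleton, ← mul_assoc, DihedralGroup.sr_mul_r, DihedralGroup.sr_mul_sr,
        DihedralGroup.one_def]
      congr 1
      rw [hkt]; ring
  · -- k = n - 1 : use [sr v, r t, sr u]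
    have hk1 : k = n - 1 := by omega
    have hvu : u - v = (t : ZMod n) := by
      have hknm : (k : ZMod n) = -1 := by
        rw [hk1]
        have h2 : ((n - 1 : ℕ) : ZMod n) = (n : ZMod n) - 1 := by
          push_cast [Nat.cast_sub (by omega : 1 ≤ n)]; ring
        rw [h2, ZMod.natCast_self]; ring
      rw [hknm] at hkt
      have : v - u = -(t : ZMod n) := by rw [← hkt]; ring
      rw [← neg_sub v u, this]; ring
    refine ⟨{DihedralGroup.sr v, DihedralGroup.r (t : ZMod n), DihedralGroup.sr u}, ?_, by simp,
      [DihedralGroup.sr v, DihedralGroup.r (t : ZMod n), DihedralGroup.sr u], rfl, ?_⟩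
    · have h1 : ({DihedralGroup.sr v, DihedralGroup.r (t : ZMod n), DihedralGroup.sr u} :
          Multiset (DihedralGroup n)) =
          Multiset.replicate 1 (DihedralGroup.r (t : ZMod n)) +
            {DihedralGroup.sr u, DihedralGroup.sr v} := by
        simp only [Multiset.insert_eq_cons, ← Multiset.singleton_add, Multiset.replicate_one]
        ac_rfl
      rw [h1]
      exact add_le_add ((Multiset.replicate_le_replicate _).mpr (by omega)) le_rfl
    · rw [List.prod_cons, List.prod_cons, List.prod_singleton, ← mul_assoc,
        DihedralGroup.sr_mul_r, DihedralGroup.sr_mul_sr, DihedralGroup.one_def]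
      congr 1
      have : u - (v + (t : ZMod n)) = (u - v) - (t : ZMod n) := by ring
      rw [this, hvu, sub_self]
end

section
/- For n ≥ 3, in the dicyclic group Q_{4n}, any sequence of the form (y^t)^{2n−1}(xy^s), where gcd(t, 2n) = 1 and 0 ≤ s ≤ 2n−1, is free of product-1 subsequences. -/
open QuaternionGroup

/-- The parity homomorphism `QuaternionGroup n →* Multiplicative (ZMod 2)`,
sending `a i ↦ 0` and `xa i ↦ 1`. -/
def parHom {n : ℕ} : QuaternionGroup n →* Multiplicative (ZMod 2) where
  toFun g := match g with
    | QuaternionGroup.a _ => 1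
    | QuaternionGroup.xa _ => Multiplicative.ofAdd 1
  map_one' := rfl
  map_mul' := by
    rintro (i | i) (j | j) <;> simp only [a_mul_a, a_mul_xa, xa_mul_a, xa_mul_xa] <;> decide

lemma a_pow_eq {n : ℕ} (i : ZMod (2 * n)) (k : ℕ) :
    (QuaternionGroup.a i : QuaternionGroup n) ^ k = QuaternionGroup.a ((k : ZMod (2 * n)) * i) := by
  induction k with
  | zero => simp
  | succ k ih =>
      rw [pow_succ, ih, a_mul_a]
      congr 1
      push_cast
      ring

lemma multiset_two_vals {α : Type*} [DecidableEq α] (x y : α) (hxy : x ≠ y) (T : Multiset α)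
    (h : ∀ z ∈ T, z = x ∨ z = y) :
    T = Multiset.replicate (T.count x) x + Multiset.replicate (T.count y) y := by
  induction T using Multiset.induction with
  | empty => simp
  | cons c Tc ih =>
    have hc := h c (Multiset.mem_cons_self c Tc)
    have ih' := ih (fun z hz => h z (Multiset.mem_cons_of_mem hz))
    rcases hc with rfl | rfl
    · rw [Multiset.count_cons_self, Multiset.count_cons_of_ne hxy.symm,
        Multiset.replicate_succ, Multiset.cons_add, ← ih']
    · rw [Multiset.count_cons_self, Multiset.count_cons_of_ne hxy,
        Multiset.replicate_succ, Multiset.add_cons, ← ih']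

theorem dicyclic_extremal_is_free (n : ℕ) (hn : 3 ≤ n) (t s : ℕ)
    (htn : Nat.gcd t (2 * n) = 1) (hs : s ≤ 2 * n - 1) :
    IsProdOneFree
      (Multiset.replicate (2 * n - 1) (QuaternionGroup.a (t : ZMod (2 * n))) +
        {QuaternionGroup.xa (s : ZMod (2 * n))}) := by
  rintro ⟨T, hT, hT0, l, hl, hprod⟩
  set x : QuaternionGroup n := QuaternionGroup.a (t : ZMod (2 * n)) with hx
  set y : QuaternionGroup n := QuaternionGroup.xa (s : ZMod (2 * n)) with hy
  have hxy : x ≠ y := by simp [hx, hy]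
  have hmem : ∀ z ∈ T, z = x ∨ z = y := by
    intro z hz
    have := Multiset.mem_of_le hT hz
    simp only [Multiset.mem_add, Multiset.mem_replicate, Multiset.mem_singleton] at this
    tauto
  set k := T.count x with hk
  set e := T.count y with he
  have hTeq : T = Multiset.replicate k x + Multiset.replicate e y :=
    multiset_two_vals x y hxy T hmem
  -- bounds on counts
  have hkle : k ≤ 2 * n - 1 := by
    have := Multiset.count_le_of_le x hT
    simpa [Multiset.count_replicate, hxy, Ne.symm hxy] using this
  have hele : e ≤ 1 := by
    have := Multiset.count_le_of_le y hT
    simpa [Multiset.count_replicate, hxy, Ne.symm hxy] using this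
  -- parity: e must be even, hence e = 0
  have hpar : ((Multiset.map parHom T).prod : Multiplicative (ZMod 2)) = 1 := by
    rw [← hl, Multiset.map_coe, Multiset.prod_coe, ← MonoidHom.map_list_prod, hprod, map_one]
  have hpar2 : (Multiplicative.ofAdd (1 : ZMod 2)) ^ e = 1 := by
    rw [hTeq] at hpar
    simpa [show parHom x = 1 from rfl, show parHom y = Multiplicative.ofAdd 1 from rfl, Multiset.map_replicate, Multiset.prod_replicate] using hpar
  have he0 : e = 0 := by
    interval_cases e
    · rfl
    · exfalso; rw [pow_one] at hpar2; exact absurd hpar2 (by decide)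
  -- now T is k copies of a t
  rw [he0, Multiset.replicate_zero, add_zero] at hTeq
  have hk0 : k ≠ 0 := by
    intro h0
    rw [h0, Multiset.replicate_zero] at hTeq
    exact hT0 hTeq
  have hlen : l.length = k := by
    have := congrArg Multiset.card hl
    simpa [hTeq] using this
  have hall : ∀ z ∈ l, z = x := by
    intro z hz
    have : z ∈ T := by rw [← hl] at *; simpa using hz
    rw [hTeq] at this
    exact (Multiset.eq_of_mem_replicate this)
  have hprod' : l.prod = x ^ k := by
    rw [List.prod_eq_pow_card l x hall, hlen]
  rw [hprod'] at hprod
  rw [hx, a_pow_eq] at hprod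
  have hzero : ((k * t : ℕ) : ZMod (2 * n)) = 0 := by
    rw [one_def] at hprod
    have h2 := QuaternionGroup.a.inj hprod
    push_cast at h2 ⊢
    simpa using h2
  have hn0 : 2 * n ≠ 0 := by omega
  haveI : NeZero (2 * n) := ⟨hn0⟩
  have hdvd : 2 * n ∣ k * t := (ZMod.natCast_eq_zero_iff _ _).mp hzero
  have hcop : Nat.Coprime (2 * n) t := (Nat.coprime_comm.mp htn)
  have : 2 * n ∣ k := (Nat.Coprime.dvd_of_dvd_mul_right hcop) hdvd
  have := Nat.le_of_dvd (Nat.pos_of_ne_zero hk0) this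
  omega
end

section
/- In the dicyclic group Q_{12} = ⟨x, y | x² = y³, y⁶ = 1, yx = xy⁻¹⟩, if S is a sequence of 6 elements free of product-1 subsequences with exactly 5 elements in ⟨y⟩, then S = (y^r)^5 (xy^s) for some r ∈ {1, 5} and s ∈ {0, …, 5}. -/
set_option maxRecDepth 20000

set_option maxHeartbeats 4000000 in
private lemma zsf5 : ∀ a b c d e : ZMod 6,
    (∀ t ∈ [a,b,c,d,e].sublists, t ≠ [] → t.sum ≠ 0) →
    (∀ x ∈ [a,b,c,d,e], x = 1) ∨ (∀ x ∈ [a,b,c,d,e], x = 5) := by decide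

private lemma prod_map_a (l : List (ZMod (2 * 3))) :
    (l.map (QuaternionGroup.a (n := 3))).prod
      = QuaternionGroup.a l.sum := by
  induction l with
  | nil => simp
  | cons h t ih => simp [ih, QuaternionGroup.a_mul_a]

open scoped Classical in
theorem inverse_dicyclic_twelve_case5 (S : Multiset (QuaternionGroup 3))
    (hS : Multiset.card S = 6) (hfree : IsProdOneFree S)
    (h5 : Multiset.card
      (S.filter (fun g => ∃ i : ZMod 6, g = QuaternionGroup.a i)) = 5) :
    ∃ r s : ZMod 6, (r = 1 ∨ r = 5) ∧
      S = Multiset.replicate 5 (QuaternionGroup.a r) + {QuaternionGroup.xa s} := by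
  set P : QuaternionGroup 3 → Prop := fun g => ∃ i : ZMod 6, g = QuaternionGroup.a i with hP
  have hsplit : S.filter P + S.filter (fun g => ¬ P g) = S := Multiset.filter_add_not P S
  have hcards := congrArg Multiset.card hsplit
  rw [Multiset.card_add, hS] at hcards
  have hcard1 : Multiset.card (S.filter (fun g => ¬ P g)) = 1 := by
    rw [h5] at hcards; omega
  obtain ⟨x, hx⟩ := Multiset.card_eq_one.mp hcard1
  have hxmem : x ∈ S.filter (fun g => ¬ P g) := by rw [hx]; simp
  obtain ⟨hxS, hxnP⟩ := Multiset.mem_filter.mp hxmem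
  obtain (i | s) := x
  · exact absurd ⟨i, rfl⟩ hxnP
  set e : QuaternionGroup 3 → ZMod 6 :=
    fun g => match g with | .a i => i | .xa _ => 0 with he
  set M : Multiset (ZMod 6) := (S.filter P).map e with hMdef
  have hAM : S.filter P = M.map QuaternionGroup.a := by
    rw [hMdef, Multiset.map_map]
    conv_lhs => rw [← Multiset.map_id (S.filter P)]
    apply Multiset.map_congr rfl
    intro g hg
    obtain ⟨j, rfl⟩ := (Multiset.mem_filter.mp hg).2
    rfl
  have hM5 : Multiset.card M = 5 := by rw [hMdef, Multiset.card_map]; exact h5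
  -- zero-sum-freeness of M
  have hzsf : ∀ T : Multiset (ZMod 6), T ≤ M → T ≠ 0 → T.sum ≠ 0 := by
    intro T hT hT0 hsum
    apply hfree
    refine ⟨T.map QuaternionGroup.a, ?_, ?_, T.toList.map QuaternionGroup.a, ?_, ?_⟩
    · calc T.map QuaternionGroup.a ≤ M.map QuaternionGroup.a := Multiset.map_le_map hT
        _ = S.filter P := hAM.symm
        _ ≤ S := Multiset.filter_le _ _
    · simpa using hT0
    · rw [← Multiset.map_coe, Multiset.coe_toList]
    · rw [prod_map_a]
      have : T.toList.sum = T.sum := by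
        rw [← Multiset.sum_toList T]
      rw [this, hsum, ← QuaternionGroup.one_def]
  -- write M as a 5-element list
  have hlen : M.toList.length = 5 := by rw [Multiset.length_toList]; exact hM5
  have hlM : (M.toList : Multiset (ZMod 6)) = M := Multiset.coe_toList M
  rcases hl : M.toList with _ | ⟨a, _ | ⟨b, _ | ⟨c, _ | ⟨d, _ | ⟨f, _ | ⟨g, l⟩⟩⟩⟩⟩⟩ <;>
    rw [hl] at hlen hlM <;> simp only [List.length] at hlen <;>
    try omega
  have key := zsf5 a b c d f ?_
  · have hMrep : M = Multiset.replicate 5 1 ∨ M = Multiset.replicate 5 5 := by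
      rcases key with h | h
      · left
        rw [← hlM]
        exact Multiset.eq_replicate.mpr ⟨by simp, fun x hx => h x (by simpa using hx)⟩
      · right
        rw [← hlM]
        exact Multiset.eq_replicate.mpr ⟨by simp, fun x hx => h x (by simpa using hx)⟩
    rcases hMrep with h | h
    · refine ⟨1, s, Or.inl rfl, ?_⟩
      rw [← hsplit, hAM, h, Multiset.map_replicate, hx]
    · refine ⟨5, s, Or.inr rfl, ?_⟩
      rw [← hsplit, hAM, h, Multiset.map_replicate, hx]
  · intro t ht ht0
    have hsub : t.Sublist [a, b, c, d, f] := (List.mem_sublists).mp ht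
    have hle : (t : Multiset (ZMod 6)) ≤ M := by
      rw [← hlM]
      exact Multiset.coe_le.mpr hsub.subperm
    have := hzsf t hle (by simpa using ht0)
    simpa using this
end
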